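/- The loop T_L has the inverse property: for all x, y ∈ T_L, x⁻¹·(x·y) = y and (y·x)·x⁻¹ = y. -/

import Mathlib

/-- Iterated Cayley–Dickson doubling starting from `ℝ`. -/
def CD : ℕ → Type
  | 0 => ℝ
  | n + 1 => CD n × CD n

instance cdAddCommGroup : ∀ n, AddCommGroup (CD n)
  | 0 => inferInstanceAs (AddCommGroup ℝ)
  | n + 1 => letI := cdAddCommGroup n; inferInstanceAs (AddCommGroup (CD n × CD n))

noncomputable instance cdModule : ∀ n, Module ℝ (CD n)
  | 0 => inferInstanceAs (Module ℝ ℝ)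
  | n + 1 => letI := cdModule n; inferInstanceAs (Module ℝ (CD n × CD n))

/-- Cayley–Dickson conjugation, starting from the identity on `ℝ`. -/
def cdConj : ∀ n, CD n → CD n
  | 0, x => x
  | n + 1, x => (cdConj n x.1, -x.2)

/-- Cayley–Dickson multiplication: `(a,b)(c,d) = (ac − d b̄, ā d + c b)`. -/
def cdMul : ∀ n, CD n → CD n → CD n
  | 0, x, y => @Mul.mul ℝ _ x y
  | n + 1, x, y =>
      (cdMul n x.1 y.1 - cdMul n y.2 (cdConj n x.2),
       cdMul n (cdConj n x.1) y.2 + cdMul n y.1 x.2)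

instance cdMulInst (n : ℕ) : Mul (CD n) := ⟨cdMul n⟩

instance cdOne : ∀ n, One (CD n)
  | 0 => ⟨(1 : ℝ)⟩
  | n + 1 => letI := cdOne n; ⟨((1 : CD n), 0)⟩

/-- The standard basis elements: under a doubling step `A → A × A`, a basis element
`e k` of `A` gives `e k = (e k, 0)` and `e (k + dim A) = (0, e k)`. -/
def cdE : ∀ n, ℕ → CD n
  | 0, _ => (1 : ℝ)
  | n + 1, k => if k < 2 ^ n then (cdE n k, 0) else (0, cdE n (k - 2 ^ n))

/-- The trigintaduonions: the 32-dimensional real Cayley–Dickson algebra. -/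
abbrev TT := CD 5

/-- The 32 standard basis elements `e 0 = 1, e 1, …, e 31` of `𝕋`. -/
def e (i : ℕ) : TT := cdE 5 i

/-- The trigintaduonion loop `T_L = {±e 0, ±e 1, …, ±e 31}`. -/
def TL : Set TT := {x | ∃ i < 32, x = e i ∨ x = -e i}

/-- A subloop of `T_L`: a nonempty subset of `T_L` closed under multiplication. -/
def IsSubloop (N : Set TT) : Prop :=
  N ⊆ TL ∧ N.Nonempty ∧ ∀ x ∈ N, ∀ y ∈ N, x * y ∈ N

/-- Two subsets of `T_L` are isomorphic (as loops) if some bijection between them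
preserves multiplication. -/
def LoopIso (A B : Set TT) : Prop :=
  ∃ f : TT → TT, Set.BijOn f A B ∧ ∀ x ∈ A, ∀ y ∈ A, f (x * y) = f x * f y


/-! ### Auxiliary lemmas -/

theorem cdConj_zero : ∀ n, cdConj n (0 : CD n) = 0
  | 0 => rfl
  | n + 1 => by
      show (cdConj n (0 : CD n × CD n).1, -(0 : CD n × CD n).2) = (0 : CD n × CD n)
      rw [show (0 : CD n × CD n).1 = (0 : CD n) from rfl,
        show (0 : CD n × CD n).2 = (0 : CD n) from rfl, cdConj_zero n, neg_zero]
      rfl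

theorem cdNeg_mk (n : ℕ) (a b : CD n) : -((a, b) : CD (n + 1)) = (-a, -b) := rfl

theorem cdNeg_pair_left (n : ℕ) (a : CD n) : -((a, 0) : CD (n + 1)) = (-a, 0) := by
  rw [cdNeg_mk, neg_zero]

theorem cdNeg_pair_right (n : ℕ) (a : CD n) : -((0, a) : CD (n + 1)) = (0, -a) := by
  rw [cdNeg_mk, neg_zero]

theorem cdMul_zero : ∀ n (x : CD n), cdMul n 0 x = 0 ∧ cdMul n x 0 = 0
  | 0, x => ⟨zero_mul (M₀ := ℝ) x, mul_zero (M₀ := ℝ) x⟩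
  | n + 1, x => by
      constructor
      · show (cdMul n (0 : CD n × CD n).1 x.1 - cdMul n x.2 (cdConj n (0 : CD n × CD n).2),
              cdMul n (cdConj n (0 : CD n × CD n).1) x.2 + cdMul n x.1 (0 : CD n × CD n).2)
          = (0 : CD n × CD n)
        rw [show (0 : CD n × CD n).1 = (0 : CD n) from rfl,
          show (0 : CD n × CD n).2 = (0 : CD n) from rfl, cdConj_zero n,
          (cdMul_zero n x.1).1, (cdMul_zero n x.2).2,
          (cdMul_zero n x.2).1, (cdMul_zero n x.1).2]
        rw [sub_zero, add_zero]
        rfl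
      · show (cdMul n x.1 (0 : CD n × CD n).1 - cdMul n (0 : CD n × CD n).2 (cdConj n x.2),
              cdMul n (cdConj n x.1) (0 : CD n × CD n).2 + cdMul n (0 : CD n × CD n).1 x.2)
          = (0 : CD n × CD n)
        rw [show (0 : CD n × CD n).1 = (0 : CD n) from rfl,
          show (0 : CD n × CD n).2 = (0 : CD n) from rfl,
          (cdMul_zero n x.1).2, (cdMul_zero n (cdConj n x.2)).1,
          (cdMul_zero n (cdConj n x.1)).2, (cdMul_zero n x.2).1]
        rw [sub_zero, add_zero]
        rfl

theorem cdMul_zero_left (n : ℕ) (x : CD n) : cdMul n 0 x = 0 := (cdMul_zero n x).1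
theorem cdMul_zero_right (n : ℕ) (x : CD n) : cdMul n x 0 = 0 := (cdMul_zero n x).2

theorem cdConj_neg : ∀ n (x : CD n), cdConj n (-x) = -(cdConj n x)
  | 0, x => rfl
  | n + 1, x => by
      show (cdConj n (-x).1, -(-x).2) = -((cdConj n x.1, -x.2) : CD n × CD n)
      rw [show (-x).1 = -x.1 from rfl, show (-x).2 = -x.2 from rfl, cdConj_neg n]
      rfl

theorem cdMul_neg : ∀ n (x y : CD n),
    cdMul n (-x) y = -(cdMul n x y) ∧ cdMul n x (-y) = -(cdMul n x y)
  | 0, x, y => ⟨neg_mul (α := ℝ) x y, mul_neg (α := ℝ) x y⟩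
  | n + 1, x, y => by
      constructor
      · show (cdMul n (-x).1 y.1 - cdMul n y.2 (cdConj n (-x).2),
              cdMul n (cdConj n (-x).1) y.2 + cdMul n y.1 (-x).2)
          = -((cdMul n x.1 y.1 - cdMul n y.2 (cdConj n x.2),
              cdMul n (cdConj n x.1) y.2 + cdMul n y.1 x.2) : CD n × CD n)
        rw [show (-x).1 = -x.1 from rfl, show (-x).2 = -x.2 from rfl,
          cdConj_neg n x.1, cdConj_neg n x.2,
          (cdMul_neg n x.1 y.1).1, (cdMul_neg n y.2 (cdConj n x.2)).2,
          (cdMul_neg n (cdConj n x.1) y.2).1, (cdMul_neg n y.1 x.2).2]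
        ext <;> simp <;> abel
      · show (cdMul n x.1 (-y).1 - cdMul n (-y).2 (cdConj n x.2),
              cdMul n (cdConj n x.1) (-y).2 + cdMul n (-y).1 x.2)
          = -((cdMul n x.1 y.1 - cdMul n y.2 (cdConj n x.2),
              cdMul n (cdConj n x.1) y.2 + cdMul n y.1 x.2) : CD n × CD n)
        rw [show (-y).1 = -y.1 from rfl, show (-y).2 = -y.2 from rfl,
          (cdMul_neg n x.1 y.1).2, (cdMul_neg n y.2 (cdConj n x.2)).1,
          (cdMul_neg n (cdConj n x.1) y.2).2, (cdMul_neg n y.1 x.2).1]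
        ext <;> simp <;> abel

theorem cdMul_neg_left (n : ℕ) (x y : CD n) : cdMul n (-x) y = -(cdMul n x y) :=
  (cdMul_neg n x y).1
theorem cdMul_neg_right (n : ℕ) (x y : CD n) : cdMul n x (-y) = -(cdMul n x y) :=
  (cdMul_neg n x y).2

theorem cdConj_E : ∀ n k, k < 2 ^ n →
    cdConj n (cdE n k) = if k = 0 then cdE n k else -(cdE n k)
  | 0, k, hk => by
      interval_cases k
      simp [cdConj, cdE]
      rfl
  | n + 1, k, hk => by
      have h1 : (0:ℕ) < 2 ^ n := Nat.pow_pos (by norm_num)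
      by_cases h : k < 2 ^ n
      · have hE : cdE (n + 1) k = (cdE n k, 0) := by rw [cdE]; exact if_pos h
        rw [hE]
        show (cdConj n (cdE n k), -(0 : CD n)) = _
        rw [cdConj_E n k h, neg_zero]
        by_cases hk0 : k = 0
        · rw [if_pos hk0]; exact (if_pos hk0).symm
        · rw [if_neg hk0]; exact ((if_neg hk0).trans (cdNeg_pair_left n _)).symm
      · have hE : cdE (n + 1) k = (0, cdE n (k - 2 ^ n)) := by rw [cdE]; exact if_neg h
        rw [hE]
        show (cdConj n 0, -(cdE n (k - 2 ^ n))) = _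
        rw [cdConj_zero]
        exact ((if_neg (show ¬ k = 0 by omega)).trans (cdNeg_pair_right n _)).symm

/-- Index/sign-level basis multiplication: `e_i · e_j = (-1)^(bmul n i j).1 · e_(bmul n i j).2`. -/
def bmul : ℕ → ℕ → ℕ → Bool × ℕ
  | 0, _, _ => (false, 0)
  | n + 1, i, j =>
    if i < 2 ^ n then
      if j < 2 ^ n then bmul n i j
      else
        let p := bmul n i (j - 2 ^ n)
        (xor (decide (i ≠ 0)) p.1, p.2 + 2 ^ n)
    else
      if j < 2 ^ n then
        let p := bmul n j (i - 2 ^ n)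
        (p.1, p.2 + 2 ^ n)
      else
        let p := bmul n (j - 2 ^ n) (i - 2 ^ n)
        (xor (decide (i - 2 ^ n ≠ 0)) (!p.1), p.2)

theorem cdMul_E : ∀ n i j, i < 2 ^ n → j < 2 ^ n →
    (bmul n i j).2 < 2 ^ n ∧
    cdMul n (cdE n i) (cdE n j)
      = if (bmul n i j).1 then -(cdE n (bmul n i j).2) else cdE n (bmul n i j).2
  | 0, i, j, hi, hj => by
      interval_cases i
      interval_cases j
      refine ⟨by norm_num [bmul], ?_⟩
      show (1 : ℝ) * 1 = _
      norm_num [bmul, cdE]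
      rfl
  | n + 1, i, j, hi, hj => by
      have hpow : 2 ^ (n + 1) = 2 ^ n + 2 ^ n := by ring
      have h1 : (0:ℕ) < 2 ^ n := Nat.pow_pos (by norm_num)
      by_cases hiN : i < 2 ^ n <;> by_cases hjN : j < 2 ^ n
      · -- case A: i < N, j < N
        obtain ⟨ihb, ihm⟩ := cdMul_E n i j hiN hjN
        have hbm : bmul (n + 1) i j = bmul n i j := by
          rw [bmul, if_pos hiN, if_pos hjN]
        rw [hbm]
        refine ⟨by omega, ?_⟩
        have hEi : cdE (n + 1) i = (cdE n i, 0) := by rw [cdE]; exact if_pos hiN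
        have hEj : cdE (n + 1) j = (cdE n j, 0) := by rw [cdE]; exact if_pos hjN
        have hEr : cdE (n + 1) (bmul n i j).2 = (cdE n (bmul n i j).2, 0) := by
          rw [cdE]; exact if_pos ihb
        rw [hEi, hEj, hEr]
        show (cdMul n (cdE n i) (cdE n j) - cdMul n 0 (cdConj n 0),
              cdMul n (cdConj n (cdE n i)) 0 + cdMul n (cdE n j) 0) = _
        rw [cdConj_zero, cdMul_zero_left, cdMul_zero_right, cdMul_zero_right,
          sub_zero, add_zero, ihm]
        cases hb : (bmul n i j).1 <;> simp [hb] <;>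
          first
            | rfl
            | exact (cdNeg_pair_left n _).symm
            | exact (cdNeg_pair_right n _).symm
            | simp [cdNeg_pair_left, cdNeg_pair_right]
      · -- case B: i < N, j ≥ N
        have hj' : j - 2 ^ n < 2 ^ n := by omega
        obtain ⟨ihb, ihm⟩ := cdMul_E n i (j - 2 ^ n) hiN hj'
        have hbm : bmul (n + 1) i j
            = (xor (decide (i ≠ 0)) (bmul n i (j - 2 ^ n)).1,
               (bmul n i (j - 2 ^ n)).2 + 2 ^ n) := by
          rw [bmul, if_pos hiN, if_neg hjN]
        rw [hbm]
        refine ⟨by rw [hpow]; exact Nat.add_lt_add_right ihb _, ?_⟩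
        have hEi : cdE (n + 1) i = (cdE n i, 0) := by rw [cdE]; exact if_pos hiN
        have hEj : cdE (n + 1) j = (0, cdE n (j - 2 ^ n)) := by rw [cdE]; exact if_neg hjN
        have hEr : cdE (n + 1) ((bmul n i (j - 2 ^ n)).2 + 2 ^ n)
            = (0, cdE n (bmul n i (j - 2 ^ n)).2) := by
          rw [cdE]; exact (if_neg (Nat.not_lt.mpr (Nat.le_add_left _ _))).trans (by rw [Nat.add_sub_cancel])
        rw [hEi, hEj, hEr]
        show (cdMul n (cdE n i) 0 - cdMul n (cdE n (j - 2 ^ n)) (cdConj n 0),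
              cdMul n (cdConj n (cdE n i)) (cdE n (j - 2 ^ n)) + cdMul n 0 0) = _
        rw [cdConj_zero, cdMul_zero_right, cdMul_zero_right, cdMul_zero_left,
          sub_zero, add_zero, cdConj_E n i hiN]
        by_cases hi0 : i = 0
        · have hd : (decide (i ≠ 0)) = false := by simp [hi0]
          rw [if_pos hi0, ihm, hd]
          cases hb : (bmul n i (j - 2 ^ n)).1 <;> simp [hb] <;>
          first
            | rfl
            | exact (cdNeg_pair_left n _).symm
            | exact (cdNeg_pair_right n _).symm
            | simp [cdNeg_pair_left, cdNeg_pair_right]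
        · have hd : (decide (i ≠ 0)) = true := by simp [hi0]
          rw [if_neg hi0, cdMul_neg_left, ihm, hd]
          cases hb : (bmul n i (j - 2 ^ n)).1 <;> simp [hb] <;>
          first
            | rfl
            | exact (cdNeg_pair_left n _).symm
            | exact (cdNeg_pair_right n _).symm
            | simp [cdNeg_pair_left, cdNeg_pair_right]
      · -- case C: i ≥ N, j < N
        have hi' : i - 2 ^ n < 2 ^ n := by omega
        obtain ⟨ihb, ihm⟩ := cdMul_E n j (i - 2 ^ n) hjN hi'
        have hbm : bmul (n + 1) i j
            = ((bmul n j (i - 2 ^ n)).1, (bmul n j (i - 2 ^ n)).2 + 2 ^ n) := by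
          rw [bmul, if_neg hiN, if_pos hjN]
        rw [hbm]
        refine ⟨by rw [hpow]; exact Nat.add_lt_add_right ihb _, ?_⟩
        have hEi : cdE (n + 1) i = (0, cdE n (i - 2 ^ n)) := by rw [cdE]; exact if_neg hiN
        have hEj : cdE (n + 1) j = (cdE n j, 0) := by rw [cdE]; exact if_pos hjN
        have hEr : cdE (n + 1) ((bmul n j (i - 2 ^ n)).2 + 2 ^ n)
            = (0, cdE n (bmul n j (i - 2 ^ n)).2) := by
          rw [cdE]; exact (if_neg (Nat.not_lt.mpr (Nat.le_add_left _ _))).trans (by rw [Nat.add_sub_cancel])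
        rw [hEi, hEj, hEr]
        show (cdMul n 0 (cdE n j) - cdMul n 0 (cdConj n (cdE n (i - 2 ^ n))),
              cdMul n (cdConj n 0) 0 + cdMul n (cdE n j) (cdE n (i - 2 ^ n))) = _
        rw [cdConj_zero, cdMul_zero_left, cdMul_zero_left, cdMul_zero_right,
          sub_zero, zero_add, ihm]
        cases hb : (bmul n j (i - 2 ^ n)).1 <;> simp [hb] <;>
          first
            | rfl
            | exact (cdNeg_pair_left n _).symm
            | exact (cdNeg_pair_right n _).symm
            | simp [cdNeg_pair_left, cdNeg_pair_right]
      · -- case D: i ≥ N, j ≥ N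
        have hi' : i - 2 ^ n < 2 ^ n := by omega
        have hj' : j - 2 ^ n < 2 ^ n := by omega
        obtain ⟨ihb, ihm⟩ := cdMul_E n (j - 2 ^ n) (i - 2 ^ n) hj' hi'
        have hbm : bmul (n + 1) i j
            = (xor (decide (i - 2 ^ n ≠ 0)) (!(bmul n (j - 2 ^ n) (i - 2 ^ n)).1),
               (bmul n (j - 2 ^ n) (i - 2 ^ n)).2) := by
          rw [bmul, if_neg hiN, if_neg hjN]
        rw [hbm]
        refine ⟨by omega, ?_⟩
        have hEi : cdE (n + 1) i = (0, cdE n (i - 2 ^ n)) := by rw [cdE]; exact if_neg hiN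
        have hEj : cdE (n + 1) j = (0, cdE n (j - 2 ^ n)) := by rw [cdE]; exact if_neg hjN
        have hEr : cdE (n + 1) (bmul n (j - 2 ^ n) (i - 2 ^ n)).2
            = (cdE n (bmul n (j - 2 ^ n) (i - 2 ^ n)).2, 0) := by
          rw [cdE]; exact if_pos ihb
        rw [hEi, hEj, hEr]
        show (cdMul n 0 0 - cdMul n (cdE n (j - 2 ^ n)) (cdConj n (cdE n (i - 2 ^ n))),
              cdMul n (cdConj n 0) (cdE n (j - 2 ^ n)) + cdMul n 0 (cdE n (i - 2 ^ n))) = _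
        rw [cdConj_zero, cdMul_zero_left, cdMul_zero_left, cdMul_zero_left,
          zero_sub, zero_add, cdConj_E n (i - 2 ^ n) hi']
        by_cases hi0 : i - 2 ^ n = 0
        · have hd : (decide (i - 2 ^ n ≠ 0)) = false := by simp [hi0]
          rw [if_pos hi0, ihm, hd]
          cases hb : (bmul n (j - 2 ^ n) (i - 2 ^ n)).1 <;> simp [hb] <;>
          first
            | rfl
            | exact (cdNeg_pair_left n _).symm
            | exact (cdNeg_pair_right n _).symm
            | simp [cdNeg_pair_left, cdNeg_pair_right]
        · have hd : (decide (i - 2 ^ n ≠ 0)) = true := by simp [hi0]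
          rw [if_neg hi0, cdMul_neg_right, ihm, hd]
          cases hb : (bmul n (j - 2 ^ n) (i - 2 ^ n)).1 <;> simp [hb] <;>
          first
            | rfl
            | exact (cdNeg_pair_left n _).symm
            | exact (cdNeg_pair_right n _).symm
            | simp [cdNeg_pair_left, cdNeg_pair_right]

set_option maxHeartbeats 1600000 in
theorem bKey : ∀ i j : Fin 32,
    ((bmul 5 i (bmul 5 i j).2).2 = (j : ℕ) ∧
      xor (decide ((i : ℕ) ≠ 0)) (xor (bmul 5 i j).1 (bmul 5 i (bmul 5 i j).2).1) = false) ∧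
    ((bmul 5 (bmul 5 j i).2 i).2 = (j : ℕ) ∧
      xor (decide ((i : ℕ) ≠ 0)) (xor (bmul 5 j i).1 (bmul 5 (bmul 5 j i).2 i).1) = false) := by
  decide

theorem tt_mul_def (x y : TT) : x * y = cdMul 5 x y := rfl
theorem tt_neg_mul (x y : TT) : (-x) * y = -(x * y) := cdMul_neg_left 5 x y
theorem tt_mul_neg (x y : TT) : x * (-y) = -(x * y) := cdMul_neg_right 5 x y

/-- The loop inverse of `e i`. -/
noncomputable def invE (i : ℕ) : TT := if i = 0 then e 0 else -e i

theorem key_real (i j : ℕ) (hi32 : i < 32) (hj32 : j < 32) :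
    invE i * (e i * e j) = e j ∧ (e j * e i) * invE i = e j := by
  have h32 : (32 : ℕ) = 2 ^ 5 := by norm_num
  have hKey := bKey ⟨i, hi32⟩ ⟨j, hj32⟩
  constructor
  · obtain ⟨hq2, hsgn⟩ := hKey.1
    obtain ⟨hpb, hpm⟩ := cdMul_E 5 i j (h32 ▸ hi32) (h32 ▸ hj32)
    obtain ⟨hqb, hqm⟩ := cdMul_E 5 i (bmul 5 i j).2 (h32 ▸ hi32) hpb
    have hej : e i * e j
        = if (bmul 5 i j).1 then -(e (bmul 5 i j).2) else e (bmul 5 i j).2 := hpm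
    have heq : e i * e (bmul 5 i j).2
        = if (bmul 5 i (bmul 5 i j).2).1 then -(e (bmul 5 i (bmul 5 i j).2).2)
          else e (bmul 5 i (bmul 5 i j).2).2 := hqm
    rw [invE, hej]
    by_cases hi0 : i = 0 <;> cases hp1 : (bmul 5 i j).1 <;>
        cases hq1 : (bmul 5 i (bmul 5 i j).2).1 <;>
      simp only [hi0, hp1, hq1, Fin.val_mk] at hsgn heq hq2 ⊢ <;>
      simp_all [tt_neg_mul, tt_mul_neg, heq, hq2]
  · obtain ⟨hq2, hsgn⟩ := hKey.2
    obtain ⟨hpb, hpm⟩ := cdMul_E 5 j i (h32 ▸ hj32) (h32 ▸ hi32)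
    obtain ⟨hqb, hqm⟩ := cdMul_E 5 (bmul 5 j i).2 i hpb (h32 ▸ hi32)
    have hej : e j * e i
        = if (bmul 5 j i).1 then -(e (bmul 5 j i).2) else e (bmul 5 j i).2 := hpm
    have heq : e (bmul 5 j i).2 * e i
        = if (bmul 5 (bmul 5 j i).2 i).1 then -(e (bmul 5 (bmul 5 j i).2 i).2)
          else e (bmul 5 (bmul 5 j i).2 i).2 := hqm
    rw [invE, hej]
    by_cases hi0 : i = 0 <;> cases hp1 : (bmul 5 j i).1 <;>
        cases hq1 : (bmul 5 (bmul 5 j i).2 i).1 <;>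
      simp only [hi0, hp1, hq1, Fin.val_mk] at hsgn heq hq2 ⊢ <;>
      simp_all [tt_neg_mul, tt_mul_neg, heq, hq2]


/-- `T_L` has the inverse property: `x⁻¹·(x·y) = y` and `(y·x)·x⁻¹ = y`, where
`e 0⁻¹ = e 0`, `(-e 0)⁻¹ = -e 0`, and `(±e i)⁻¹ = ∓e i` for `1 ≤ i ≤ 31`. -/
theorem stmt13 (inv : TT → TT)
    (h0 : inv (e 0) = e 0) (h0' : inv (-e 0) = -e 0)
    (hi : ∀ i, 1 ≤ i → i ≤ 31 → inv (e i) = -e i ∧ inv (-e i) = e i) :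
    ∀ x ∈ TL, ∀ y ∈ TL, inv x * (x * y) = y ∧ (y * x) * inv x = y := by
  have hinv : ∀ i, i < 32 → inv (e i) = invE i ∧ inv (-e i) = -(invE i) := by
    intro i hi32
    rcases Nat.eq_zero_or_pos i with rfl | hpos
    · rw [invE, if_pos rfl, h0, h0']
      exact ⟨rfl, rfl⟩
    · have h31 : i ≤ 31 := by omega
      rw [invE, if_neg (by omega), (hi i hpos h31).1, (hi i hpos h31).2, neg_neg]
      exact ⟨rfl, rfl⟩
  rintro x ⟨i, hi32, hx⟩ y ⟨j, hj32, hy⟩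
  have hk := key_real i j hi32 hj32
  rcases hx with rfl | rfl <;> rcases hy with rfl | rfl <;>
    simp only [(hinv i hi32).1, (hinv i hi32).2, tt_neg_mul, tt_mul_neg, neg_neg,
      hk.1, hk.2, and_self]
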